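/- Let K : ℕ → ℕ → ℕ satisfy the recurrence K(ℓ,1) = 1 for all ℓ ≥ 1; K(1,m) = 2(m−1) for all m ≥ 2; K(ℓ,m) = K(m,m) for all ℓ > m ≥ 2; and K(ℓ,m) = 2·∑_{j=1}^{m−1} K(ℓ−1,j) for all 2 ≤ ℓ ≤ m. Then for all ℓ ≥ 1 and m ≥ 1: K(ℓ,m) = 1 if m = 1; K(ℓ,m) = 2·3^(m−2) if m ≥ 2 and ℓ ≥ m − 1; and K(ℓ,m) = ∑_{j=1}^{ℓ} C(m−2, j−1)·2^(j−1) + ∑_{j=0}^{ℓ} C(m−2, j)·2^j if m ≥ 2 and 1 ≤ ℓ ≤ m − 2, where C(·,·) denotes the binomial coefficient. -/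

import Mathlib

def Afn (a n : ℕ) : ℕ := ∑ i ∈ Finset.range (a + 1), n.choose i * 2 ^ i

lemma Afn_pascal (a n : ℕ) : Afn (a + 1) (n + 1) = Afn (a + 1) n + 2 * Afn a n := by
  unfold Afn
  rw [Finset.sum_range_succ' (fun i => (n+1).choose i * 2 ^ i) (a+1),
      Finset.sum_range_succ' (fun i => n.choose i * 2 ^ i) (a+1)]
  simp only [Nat.choose_succ_succ, Nat.choose_zero_right, pow_zero, mul_one, add_mul,
    Finset.sum_add_distrib, pow_succ, Finset.mul_sum, Nat.succ_eq_add_one]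
  have h : ∑ x ∈ Finset.range (1 + a), n.choose x * (2 ^ x * 2)
      = ∑ x ∈ Finset.range (1 + a), 2 * (n.choose x * 2 ^ x) :=
    Finset.sum_congr rfl (fun x _ => by ring)
  simp only [Nat.add_comm 1 a] at h ⊢
  omega

lemma Afn_diag (n : ℕ) : Afn n n = 3 ^ n := by
  induction n with
  | zero => simp [Afn]
  | succ n ih =>
    have h1 : Afn (n + 1) (n + 1) = Afn (n + 1) n + 2 * Afn n n := Afn_pascal n n
    have h2 : Afn (n + 1) n = Afn n n := by
      unfold Afn
      rw [Finset.sum_range_succ]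
      simp [Nat.choose_succ_self]
    rw [h1, h2, ih, pow_succ]
    ring

lemma Afn_sat {a n : ℕ} (h : n ≤ a) : Afn a n = 3 ^ n := by
  induction a with
  | zero => interval_cases n; simp [Afn]
  | succ a ih =>
    rcases Nat.lt_or_ge a n with h' | h'
    · have : n = a + 1 := by omega
      subst this; exact Afn_diag _
    · have : Afn (a + 1) n = Afn a n := by
        unfold Afn
        rw [Finset.sum_range_succ (fun i => n.choose i * 2 ^ i) (a+1)]
        rw [Nat.choose_eq_zero_of_lt (by omega)]
        simp
      rw [this, ih h']

lemma Afn_tele (b n : ℕ) :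
    2 + 2 * ∑ k ∈ Finset.range n, (Afn b k + Afn (b + 1) k) = Afn (b + 1) n + Afn (b + 2) n := by
  induction n with
  | zero => simp [Afn_sat (Nat.zero_le _)]
  | succ n ih =>
    have p1 : Afn (b + 1) (n + 1) = Afn (b + 1) n + 2 * Afn b n := Afn_pascal b n
    have p2 : Afn (b + 2) (n + 1) = Afn (b + 2) n + 2 * Afn (b + 1) n := Afn_pascal (b + 1) n
    rw [Finset.sum_range_succ]
    omega

lemma main_formula (K : ℕ → ℕ → ℕ)
    (h1 : ∀ l, 1 ≤ l → K l 1 = 1)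
    (h2 : ∀ m, 2 ≤ m → K 1 m = 2 * (m - 1))
    (h3 : ∀ l m, 2 ≤ m → m < l → K l m = K m m)
    (h4 : ∀ l m, 2 ≤ l → l ≤ m → K l m = 2 * ∑ j ∈ Finset.Icc 1 (m - 1), K (l - 1) j) :
    ∀ l, 1 ≤ l → ∀ m, 2 ≤ m → K l m = Afn (l - 1) (m - 2) + Afn l (m - 2) := by
  intro l
  induction l using Nat.strong_induction_on with
  | _ l ih =>
    intro hl m hm
    by_cases hl1 : l = 1
    · subst hl1
      rw [h2 m hm]
      have a0 : Afn (1 - 1) (m - 2) = 1 := by simp [Afn]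
      have a1 : Afn 1 (m - 2) = 1 + (m - 2) * 2 := by
        simp [Afn, Finset.sum_range_succ]
      omega
    · by_cases hlm : l ≤ m
      · rw [h4 l m (by omega) hlm]
        have key : ∑ j ∈ Finset.Icc 1 (m - 1), K (l - 1) j
            = 1 + ∑ k ∈ Finset.range (m - 2), (Afn (l - 2) k + Afn (l - 1) k) := by
          rw [← Finset.Ico_add_one_right_eq_Icc, Finset.sum_Ico_eq_sum_range]
          have hb : m - 1 + 1 - 1 = (m - 2) + 1 := by omega
          rw [hb, Finset.sum_range_succ' (fun i => K (l - 1) (1 + i)) (m - 2)]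
          have hK1 : K (l - 1) (1 + 0) = 1 := h1 (l - 1) (by omega)
          rw [hK1, add_comm]
          congr 1
          apply Finset.sum_congr rfl
          intro i _
          have hrec := ih (l - 1) (by omega) (by omega) (1 + (i + 1)) (by omega)
          rw [hrec]
          have e1 : l - 1 - 1 = l - 2 := by omega
          have e2 : 1 + (i + 1) - 2 = i := by omega
          rw [e1, e2]
        rw [key]
        have tel := Afn_tele (l - 2) (m - 2)
        have e1 : l - 2 + 1 = l - 1 := by omega
        have e2 : l - 2 + 2 = l := by omega
        rw [e1, e2] at tel
        omega
      · rw [h3 l m hm (by omega), ih m (by omega) (by omega) m hm]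
        rw [Afn_sat (show m - 2 ≤ m - 1 by omega), Afn_sat (show m - 2 ≤ m by omega),
            Afn_sat (show m - 2 ≤ l - 1 by omega), Afn_sat (show m - 2 ≤ l by omega)]

theorem gate_count_formula
    (K : ℕ → ℕ → ℕ)
    (h1 : ∀ l, 1 ≤ l → K l 1 = 1)
    (h2 : ∀ m, 2 ≤ m → K 1 m = 2 * (m - 1))
    (h3 : ∀ l m, 2 ≤ m → m < l → K l m = K m m)
    (h4 : ∀ l m, 2 ≤ l → l ≤ m → K l m = 2 * ∑ j ∈ Finset.Icc 1 (m - 1), K (l - 1) j) :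
    ∀ l, 1 ≤ l → ∀ m, 1 ≤ m →
      (m = 1 → K l m = 1) ∧
      (2 ≤ m → m - 1 ≤ l → K l m = 2 * 3 ^ (m - 2)) ∧
      (2 ≤ m → 1 ≤ l → l ≤ m - 2 →
        K l m = (∑ j ∈ Finset.Icc 1 l, Nat.choose (m - 2) (j - 1) * 2 ^ (j - 1)) +
                ∑ j ∈ Finset.range (l + 1), Nat.choose (m - 2) j * 2 ^ j) := by
  intro l hl m hm
  refine ⟨?_, ?_, ?_⟩
  · intro h; subst h; exact h1 l hl
  · intro hm2 hml
    rw [main_formula K h1 h2 h3 h4 l hl m hm2,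
        Afn_sat (show m - 2 ≤ l - 1 by omega), Afn_sat (show m - 2 ≤ l by omega)]
    ring
  · intro hm2 _ _
    rw [main_formula K h1 h2 h3 h4 l hl m hm2]
    congr 1
    · rw [← Finset.Ico_add_one_right_eq_Icc, Finset.sum_Ico_eq_sum_range]
      have hb : l + 1 - 1 = (l - 1) + 1 := by omega
      rw [hb]
      apply Finset.sum_congr rfl
      intro i _
      simp [Nat.add_sub_cancel_left]
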